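/- The function f(x,y) = log₂(1 + 1/(xy)) is convex on the domain {(x,y) : x > 0, y > 0}. -/

import Mathlib

open Set

/-- φ(r) = log(1 + 1/r²). -/
noncomputable def phi : ℝ → ℝ := fun r => Real.log (1 + 1 / r ^ 2)

lemma hasDerivAt_phi {x : ℝ} (hx : 0 < x) :
    HasDerivAt phi (-2 / (x * (x ^ 2 + 1))) x := by
  have hx2 : (x:ℝ) ^ 2 ≠ 0 := by positivity
  have hu : HasDerivAt (fun r : ℝ => 1 + 1 / r ^ 2) (-(2 * x) / (x ^ 2) ^ 2) x := by
    have h3 := ((hasDerivAt_pow 2 x).inv hx2).const_add (1 : ℝ)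
    norm_num at h3
    simpa [one_div] using h3
  have hpos : (0:ℝ) < 1 + 1 / x ^ 2 := by positivity
  have hlog := (Real.hasDerivAt_log (ne_of_gt hpos)).comp x hu
  refine hlog.congr_deriv ?_
  field_simp

lemma deriv_phi {x : ℝ} (hx : 0 < x) :
    deriv phi x = -2 / (x * (x ^ 2 + 1)) := (hasDerivAt_phi hx).deriv

lemma hasDerivAt_g {x : ℝ} (hx : 0 < x) :
    HasDerivAt (fun r : ℝ => -2 / (r * (r ^ 2 + 1)))
      ((2 * (3 * x ^ 2 + 1)) / (x * (x ^ 2 + 1)) ^ 2) x := by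
  have hd : HasDerivAt (fun r : ℝ => r * (r ^ 2 + 1)) (3 * x ^ 2 + 1) x := by
    have := (hasDerivAt_id x).mul ((hasDerivAt_pow 2 x).add_const 1)
    refine this.congr_deriv ?_
    simp [id]
    ring
  have hne : x * (x ^ 2 + 1) ≠ 0 := by positivity
  have := (hasDerivAt_const x (-2 : ℝ)).div hd hne
  refine this.congr_deriv ?_
  field_simp
  ring

lemma eventually_deriv_phi {x : ℝ} (hx : 0 < x) :
    deriv phi =ᶠ[nhds x] fun r => -2 / (r * (r ^ 2 + 1)) := by
  filter_upwards [Ioi_mem_nhds hx] with y hy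
  exact deriv_phi hy

lemma phi_convex : ConvexOn ℝ (Ioi (0:ℝ)) phi := by
  apply convexOn_of_deriv2_nonneg (convex_Ioi 0)
  · exact fun x hx => (hasDerivAt_phi hx).continuousAt.continuousWithinAt
  · rw [interior_Ioi]
    exact fun x hx => (hasDerivAt_phi hx).differentiableAt.differentiableWithinAt
  · rw [interior_Ioi]
    intro x hx
    exact (((hasDerivAt_g hx).differentiableAt.congr_of_eventuallyEq
      (eventually_deriv_phi hx)).differentiableWithinAt)
  · rw [interior_Ioi]
    intro x hx
    have h1 : deriv (deriv phi) x = deriv (fun r : ℝ => -2 / (r * (r ^ 2 + 1))) x :=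
      (eventually_deriv_phi hx).deriv_eq
    have h2 := (hasDerivAt_g hx).deriv
    simp only [Function.iterate_succ, Function.iterate_zero, Function.comp_apply, id]
    rw [h1, h2]
    positivity

lemma phi_anti : AntitoneOn phi (Ioi (0:ℝ)) := by
  intro a ha b hb hab
  have ha' : (0:ℝ) < a := ha
  have hb' : (0:ℝ) < b := hb
  apply Real.log_le_log (by positivity)
  gcongr

lemma sqrt_mul_concave :
    ConcaveOn ℝ {p : ℝ × ℝ | 0 < p.1 ∧ 0 < p.2} (fun p : ℝ × ℝ => Real.sqrt (p.1 * p.2)) := by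
  have hconv : Convex ℝ {p : ℝ × ℝ | 0 < p.1 ∧ 0 < p.2} :=
    (convex_Ioi (0:ℝ)).prod (convex_Ioi (0:ℝ))
  refine ⟨hconv, ?_⟩
  rintro ⟨x1, x2⟩ ⟨hx1, hx2⟩ ⟨y1, y2⟩ ⟨hy1, hy2⟩ a b ha hb hab
  simp only [Prod.smul_fst, Prod.smul_snd, Prod.fst_add, Prod.snd_add, smul_eq_mul]
  set s := Real.sqrt (x1 * x2) with hs
  set t := Real.sqrt (y1 * y2) with ht
  have hs0 : 0 ≤ s := Real.sqrt_nonneg _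
  have ht0 : 0 ≤ t := Real.sqrt_nonneg _
  have hs2 : s ^ 2 = x1 * x2 := Real.sq_sqrt (by positivity)
  have ht2 : t ^ 2 = y1 * y2 := Real.sq_sqrt (by positivity)
  have key : (a * s + b * t) ^ 2 ≤ (a * x1 + b * y1) * (a * x2 + b * y2) := by
    have h2st : 2 * (s * t) ≤ x1 * y2 + y1 * x2 := by
      nlinarith [sq_nonneg (x1 * y2 - y1 * x2), sq_nonneg (s * t), mul_nonneg hs0 ht0,
        mul_pos hx1 hy2, mul_pos hy1 hx2, sq_nonneg (x1 * y2 + y1 * x2 - 2 * (s * t))]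
    have hm := mul_le_mul_of_nonneg_left h2st (mul_nonneg ha hb)
    calc (a * s + b * t) ^ 2
        = a ^ 2 * (s ^ 2) + (a * b) * (2 * (s * t)) + b ^ 2 * (t ^ 2) := by ring
      _ ≤ a ^ 2 * (x1 * x2) + (a * b) * (x1 * y2 + y1 * x2) + b ^ 2 * (y1 * y2) := by
          rw [hs2, ht2]
          exact add_le_add_left (add_le_add_right hm _) _
      _ = (a * x1 + b * y1) * (a * x2 + b * y2) := by
          have : a + b = 1 := hab
          nlinarith [this]
  calc a * s + b * t ≤ Real.sqrt ((a * s + b * t) ^ 2) := by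
        rw [Real.sqrt_sq (by positivity)]
      _ ≤ Real.sqrt ((a * x1 + b * y1) * (a * x2 + b * y2)) := Real.sqrt_le_sqrt key

lemma comp_aux {s : Set (ℝ × ℝ)} {t : Set ℝ} {f : ℝ × ℝ → ℝ} {g : ℝ → ℝ}
    (hg : ConvexOn ℝ t g) (hg' : AntitoneOn g t) (hf : ConcaveOn ℝ s f)
    (hmem : ∀ x ∈ s, f x ∈ t) : ConvexOn ℝ s (fun x => g (f x)) := by
  refine ⟨hf.1, fun x hx y hy a b ha hb hab => ?_⟩
  calc g (f (a • x + b • y)) ≤ g (a • f x + b • f y) :=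
        hg' (hg.1 (hmem x hx) (hmem y hy) ha hb hab)
          (hmem _ (hf.1 hx hy ha hb hab)) (hf.2 hx hy ha hb hab)
    _ ≤ a • g (f x) + b • g (f y) := hg.2 (hmem x hx) (hmem y hy) ha hb hab

/-- The function f(x,y) = log₂(1 + 1/(xy)) is convex on {(x,y) : x > 0, y > 0}. -/
theorem stmt0 :
    ConvexOn ℝ {p : ℝ × ℝ | 0 < p.1 ∧ 0 < p.2}
      (fun p : ℝ × ℝ => Real.logb 2 (1 + 1 / (p.1 * p.2))) := by
  have hcomp : ConvexOn ℝ {p : ℝ × ℝ | 0 < p.1 ∧ 0 < p.2}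
      (fun p : ℝ × ℝ => phi (Real.sqrt (p.1 * p.2))) := by
    apply comp_aux phi_convex phi_anti sqrt_mul_concave
    rintro ⟨x, y⟩ ⟨hx, hy⟩
    exact Real.sqrt_pos.mpr (by positivity)
  have hsmul := hcomp.smul (c := (Real.log 2)⁻¹)
    (by positivity)
  apply hsmul.congr
  rintro ⟨x, y⟩ ⟨hx, hy⟩
  simp only [smul_eq_mul, phi]
  rw [Real.sq_sqrt (by positivity : (0:ℝ) ≤ x * y), Real.logb]
  ring
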